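/- Suppose 0 < P^ℓ < 1 < P^u. Set α = (P^u − 1)/(P^u − P^ℓ), which lies in (0,1), and define the probability vectors p^ℓ = f_ℓ / P^ℓ and p^{u−ℓ} = (f_u − f_ℓ)/(P^u − P^ℓ). Then for every Q ∈ ℝ^R: sup_{f ∈ D} Σ_{r=1}^R f^r Q^r = P^ℓ Σ_{r=1}^R p^{ℓ,r} Q^r + (1 − P^ℓ) CVaR_α^{p^{u−ℓ}}[Q]. -/

import Mathlib

lemma cvar_weak_dual {R : ℕ} (c g Q : Fin R → ℝ) (hg : ∀ r, 0 ≤ g r ∧ g r ≤ c r)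
    (s u : ℝ) (hgs : ∑ r, g r = s) :
    ∑ r, g r * Q r ≤ s * u + ∑ r, c r * max (Q r - u) 0 := by
  have h1 : ∀ r ∈ Finset.univ, g r * (Q r - u) ≤ c r * max (Q r - u) 0 := by
    intro r _
    rcases le_or_gt (Q r - u) 0 with h | h
    · have h2 : g r * (Q r - u) ≤ 0 := mul_nonpos_of_nonneg_of_nonpos (hg r).1 h
      have h3 : 0 ≤ c r * max (Q r - u) 0 :=
        mul_nonneg (le_trans (hg r).1 (hg r).2) (le_max_right _ _)
      linarith
    · rw [max_eq_left h.le]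
      exact mul_le_mul_of_nonneg_right (hg r).2 h.le
  have h2 := Finset.sum_le_sum h1
  have h3 : ∑ r, g r * (Q r - u) = (∑ r, g r * Q r) - s * u := by
    rw [← hgs, Finset.sum_mul, ← Finset.sum_sub_distrib]
    exact Finset.sum_congr rfl fun r _ => by ring
  linarith

lemma cvar_knapsack {R : ℕ} (hR : 0 < R) (c Q : Fin R → ℝ) (hc : ∀ r, 0 ≤ c r)
    (s : ℝ) (hs0 : 0 < s) (hsc : s < ∑ r, c r) :
    ∃ g : Fin R → ℝ, ∃ t : ℝ, (∀ r, 0 ≤ g r ∧ g r ≤ c r) ∧ (∑ r, g r = s) ∧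
      (∑ r, g r * Q r = s * t + ∑ r, c r * max (Q r - t) 0) := by
  classical
  have : Nonempty (Fin R) := Fin.pos_iff_nonempty.mp hR
  set T := Finset.univ.filter
    (fun r => s ≤ ∑ j ∈ Finset.univ.filter (fun j => Q r ≤ Q j), c j) with hT
  have hTne : T.Nonempty := by
    obtain ⟨r0, _, hmin⟩ := Finset.exists_min_image Finset.univ Q Finset.univ_nonempty
    refine ⟨r0, Finset.mem_filter.mpr ⟨Finset.mem_univ _, ?_⟩⟩
    have he : Finset.univ.filter (fun j => Q r0 ≤ Q j) = Finset.univ := by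
      ext j; simpa using hmin j (Finset.mem_univ j)
    rw [he]; linarith
  obtain ⟨r1, hr1T, hmax⟩ := Finset.exists_max_image T Q hTne
  set t := Q r1 with ht
  set A := Finset.univ.filter (fun j => t < Q j) with hA
  set B := Finset.univ.filter (fun j => Q j = t) with hB
  set N := Finset.univ.filter (fun j => ¬ t < Q j) with hN
  set Ft := ∑ j ∈ A, c j with hFt_def
  set Et := ∑ j ∈ B, c j with hEt_def
  -- the threshold sum bound
  have hGt : s ≤ ∑ j ∈ Finset.univ.filter (fun j => t ≤ Q j), c j := by
    have := Finset.mem_filter.mp hr1T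
    exact this.2
  have hdisj : Disjoint A B := by
    rw [Finset.disjoint_left]
    intro j hjA hjB
    simp only [hA, hB, Finset.mem_filter] at hjA hjB
    exact absurd hjB.2 (ne_of_gt hjA.2)
  have hsplit : ∑ j ∈ Finset.univ.filter (fun j => t ≤ Q j), c j = Ft + Et := by
    rw [hFt_def, hEt_def, ← Finset.sum_union hdisj]
    apply Finset.sum_congr _ (fun _ _ => rfl)
    ext j
    simp only [hA, hB, Finset.mem_filter, Finset.mem_union, Finset.mem_univ, true_and]
    constructor
    · intro h; rcases h.lt_or_eq with h' | h'
      · exact Or.inl h'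
      · exact Or.inr h'.symm
    · rintro (h | h)
      · exact h.le
      · exact h.ge
  have hFt : Ft < s := by
    rcases A.eq_empty_or_nonempty with hAe | hAne
    · rw [hFt_def, hAe]; simpa using hs0
    · obtain ⟨r2, hr2A, hmin2⟩ := Finset.exists_min_image A Q hAne
      have hr2t : t < Q r2 := by
        have := Finset.mem_filter.mp hr2A; exact this.2
      have hr2T : r2 ∉ T := fun h => absurd (hmax r2 h) (not_le.mpr hr2t)
      have h2 : ¬ s ≤ ∑ j ∈ Finset.univ.filter (fun j => Q r2 ≤ Q j), c j := by
        intro h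
        exact hr2T (Finset.mem_filter.mpr ⟨Finset.mem_univ _, h⟩)
      have hsub : A ⊆ Finset.univ.filter (fun j => Q r2 ≤ Q j) := by
        intro j hj
        exact Finset.mem_filter.mpr ⟨Finset.mem_univ _, hmin2 j hj⟩
      have hle := Finset.sum_le_sum_of_subset_of_nonneg hsub (fun j _ _ => hc j)
      rw [← hFt_def] at hle
      linarith [not_le.mp h2]
  have hEt0 : 0 < Et := by linarith [hGt, hsplit.symm.le]
  have hlam0 : 0 ≤ (s - Ft) / Et := div_nonneg (by linarith) hEt0.le
  have hlam1 : (s - Ft) / Et ≤ 1 := (div_le_one hEt0).mpr (by linarith)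
  set g : Fin R → ℝ := fun r =>
    if t < Q r then c r else if Q r = t then ((s - Ft) / Et) * c r else 0 with hgdef
  have hNB : N.filter (fun j => Q j = t) = B := by
    ext j
    simp only [hN, hB, Finset.mem_filter, Finset.mem_univ, true_and]
    constructor
    · exact fun h => h.2
    · intro h; exact ⟨by rw [h]; exact lt_irrefl t, h⟩
  have hsplit_univ : ∀ h : Fin R → ℝ,
      ∑ r, h r = ∑ r ∈ A, h r + (∑ r ∈ B, h r + ∑ r ∈ N.filter (fun j => ¬ Q j = t), h r) := by
    intro h
    rw [← Finset.sum_filter_add_sum_filter_not Finset.univ (fun j => t < Q j) h,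
      ← Finset.sum_filter_add_sum_filter_not N (fun j => Q j = t) h, hNB]
  have hgA : ∀ r ∈ A, g r = c r := by
    intro r hr
    have h1 : t < Q r := (Finset.mem_filter.mp hr).2
    simp [hgdef, h1]
  have hgB : ∀ r ∈ B, g r = ((s - Ft) / Et) * c r := by
    intro r hr
    have h1 : Q r = t := (Finset.mem_filter.mp hr).2
    simp [hgdef, h1]
  have hgN : ∀ r ∈ N.filter (fun j => ¬ Q j = t), g r = 0 := by
    intro r hr
    have h1 : ¬ Q r = t := (Finset.mem_filter.mp hr).2
    have h2 : ¬ t < Q r := (Finset.mem_filter.mp (Finset.mem_filter.mp hr).1).2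
    simp [hgdef, h1, h2]
  have hfeas : ∀ r, 0 ≤ g r ∧ g r ≤ c r := by
    intro r
    simp only [hgdef]
    split_ifs with h1 h2
    · exact ⟨hc r, le_refl _⟩
    · refine ⟨mul_nonneg hlam0 (hc r), ?_⟩
      calc ((s - Ft) / Et) * c r ≤ 1 * c r := mul_le_mul_of_nonneg_right hlam1 (hc r)
        _ = c r := one_mul _
    · exact ⟨le_refl 0, hc r⟩
  have hsum : ∑ r, g r = s := by
    rw [hsplit_univ g, Finset.sum_congr rfl hgA, Finset.sum_congr rfl hgB,
      Finset.sum_eq_zero hgN, ← Finset.mul_sum, ← hFt_def, ← hEt_def,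
      div_mul_cancel₀ _ (ne_of_gt hEt0)]
    ring
  refine ⟨g, t, hfeas, hsum, ?_⟩
  have hval : ∑ r, g r * Q r = Ft * 0 + (∑ r ∈ A, c r * Q r) + (s - Ft) * t := by
    rw [hsplit_univ (fun r => g r * Q r)]
    have e1 : ∑ r ∈ A, g r * Q r = ∑ r ∈ A, c r * Q r :=
      Finset.sum_congr rfl fun r hr => by rw [hgA r hr]
    have e2 : ∑ r ∈ B, g r * Q r = (s - Ft) * t := by
      have : ∑ r ∈ B, g r * Q r = ∑ r ∈ B, ((s - Ft) / Et) * t * c r := by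
        apply Finset.sum_congr rfl
        intro r hr
        have h1 : Q r = t := (Finset.mem_filter.mp hr).2
        rw [hgB r hr, h1]; ring
      rw [this, ← Finset.mul_sum, ← hEt_def]
      field_simp
    have e3 : ∑ r ∈ N.filter (fun j => ¬ Q j = t), g r * Q r = 0 :=
      Finset.sum_eq_zero fun r hr => by rw [hgN r hr]; ring
    rw [e1, e2, e3]; ring
  have hmax_sum : ∑ r, c r * max (Q r - t) 0 = (∑ r ∈ A, c r * Q r) - Ft * t := by
    rw [← Finset.sum_filter_add_sum_filter_not Finset.univ (fun j => t < Q j)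
      (fun r => c r * max (Q r - t) 0)]
    have h1 : ∑ r ∈ A, c r * max (Q r - t) 0 = ∑ r ∈ A, (c r * Q r - c r * t) := by
      apply Finset.sum_congr rfl
      intro r hr
      have h : t < Q r := (Finset.mem_filter.mp hr).2
      rw [max_eq_left (by linarith : (0:ℝ) ≤ Q r - t)]; ring
    have h2 : ∑ r ∈ N, c r * max (Q r - t) 0 = 0 := by
      apply Finset.sum_eq_zero
      intro r hr
      have h : ¬ t < Q r := (Finset.mem_filter.mp hr).2
      rw [max_eq_right (by linarith [not_lt.mp h] : Q r - t ≤ 0)]; ring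
    rw [h1, h2, Finset.sum_sub_distrib, ← Finset.sum_mul, ← hFt_def]
    ring
  rw [hval, hmax_sum]; ring
/-- With α = (P^u − 1)/(P^u − P^ℓ) ∈ (0,1), p^ℓ = f_ℓ/P^ℓ, and
p^{u−ℓ} = (f_u − f_ℓ)/(P^u − P^ℓ), the worst-case expectation over the ambiguity set equals
P^ℓ · E_{p^ℓ}[Q] + (1 − P^ℓ) · CVaR_α^{p^{u−ℓ}}[Q], where
CVaR_α^q[Q] = inf_u { u + (1−α)⁻¹ Σ_r q^r max(Q^r − u, 0) }. -/
theorem worst_case_expectation_eq_convex_combination_expectation_cvar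
    (R : ℕ) (hR : 1 ≤ R) (fl fu : Fin R → ℝ)
    (hfl : ∀ r, 0 ≤ fl r) (hlu : ∀ r, fl r ≤ fu r)
    (hPl0 : 0 < ∑ r, fl r) (hPl1 : (∑ r, fl r) < 1) (hPu : 1 < ∑ r, fu r)
    (Q : Fin R → ℝ) :
    (0 < ((∑ r, fu r) - 1) / ((∑ r, fu r) - ∑ r, fl r) ∧
      ((∑ r, fu r) - 1) / ((∑ r, fu r) - ∑ r, fl r) < 1) ∧
    sSup ((fun f : Fin R → ℝ => ∑ r, f r * Q r) ''
        {f | (∀ r, fl r ≤ f r ∧ f r ≤ fu r) ∧ ∑ r, f r = 1}) =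
      (∑ r, fl r) * (∑ r, (fl r / ∑ r', fl r') * Q r) +
        (1 - ∑ r, fl r) *
          ⨅ u : ℝ, (u + (1 - ((∑ r, fu r) - 1) / ((∑ r, fu r) - ∑ r, fl r))⁻¹ *
            ∑ r, ((fu r - fl r) / ((∑ r', fu r') - ∑ r', fl r')) * max (Q r - u) 0) := by
  have hPuPl : (0:ℝ) < (∑ r, fu r) - ∑ r, fl r := by linarith
  have hs0 : (0:ℝ) < 1 - ∑ r, fl r := by linarith
  constructor
  · exact ⟨div_pos (by linarith) hPuPl, (div_lt_one hPuPl).mpr (by linarith)⟩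
  -- set up the knapsack problem
  have hsumc : ∑ r, (fu r - fl r) = (∑ r, fu r) - ∑ r, fl r := Finset.sum_sub_distrib _ _
  obtain ⟨g, t, hfeas, hgsum, hgval⟩ := cvar_knapsack (by omega) (fun r => fu r - fl r) Q
    (fun r => by have := hlu r; linarith)
    (1 - ∑ r, fl r) hs0 (by rw [hsumc]; linarith)
  -- the dual function (in the "c" scale)
  set dual : ℝ → ℝ := fun u => (1 - ∑ r, fl r) * u + ∑ r, (fu r - fl r) * max (Q r - u) 0
    with hdual
  -- the dual function as written in the statement
  set D' : ℝ → ℝ := fun u => u + (1 - ((∑ r, fu r) - 1) / ((∑ r, fu r) - ∑ r, fl r))⁻¹ *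
      ∑ r, ((fu r - fl r) / ((∑ r', fu r') - ∑ r', fl r')) * max (Q r - u) 0 with hD'
  have hDrel : ∀ u, (1 - ∑ r, fl r) * D' u = dual u := by
    intro u
    have e2 : ∑ r, ((fu r - fl r) / ((∑ r', fu r') - ∑ r', fl r')) * max (Q r - u) 0
        = (∑ r, (fu r - fl r) * max (Q r - u) 0) / ((∑ r', fu r') - ∑ r', fl r') := by
      rw [Finset.sum_div]
      exact Finset.sum_congr rfl fun r _ => by ring
    have hio : (1 - ((∑ r, fu r) - 1) / ((∑ r, fu r) - ∑ r, fl r))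
        = (1 - ∑ r, fl r) / ((∑ r, fu r) - ∑ r, fl r) := by
      field_simp
      ring
    simp only [hD', hdual]
    rw [e2, hio]
    field_simp
  -- the optimal value
  set V : ℝ := (∑ r, fl r * Q r) + dual t with hV
  -- the optimal primal point
  set f : Fin R → ℝ := fun r => fl r + g r with hf
  have hfD : (∀ r, fl r ≤ f r ∧ f r ≤ fu r) ∧ ∑ r, f r = 1 := by
    constructor
    · intro r
      have h1 := (hfeas r).1
      have h2 := (hfeas r).2
      simp only [hf]
      constructor <;> linarith
    · simp only [hf]
      rw [Finset.sum_add_distrib, hgsum]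
      ring
  have hfval : ∑ r, f r * Q r = V := by
    simp only [hf]
    have : ∑ r, (fl r + g r) * Q r = (∑ r, fl r * Q r) + ∑ r, g r * Q r := by
      rw [← Finset.sum_add_distrib]
      exact Finset.sum_congr rfl fun r _ => by ring
    rw [this, hgval, hV, hdual]
  -- weak duality for any feasible point
  have hweak : ∀ f' : Fin R → ℝ, (∀ r, fl r ≤ f' r ∧ f' r ≤ fu r) → (∑ r, f' r = 1) →
      ∀ u, ∑ r, f' r * Q r ≤ (∑ r, fl r * Q r) + dual u := by
    intro f' hf' hf'sum u
    have hg' : ∀ r, 0 ≤ f' r - fl r ∧ f' r - fl r ≤ fu r - fl r := by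
      intro r
      have := hf' r
      constructor <;> linarith [this.1, this.2]
    have hg'sum : ∑ r, (f' r - fl r) = 1 - ∑ r, fl r := by
      rw [Finset.sum_sub_distrib, hf'sum]
    have := cvar_weak_dual (fun r => fu r - fl r) (fun r => f' r - fl r) Q hg'
      (1 - ∑ r, fl r) u hg'sum
    have e : ∑ r, (f' r - fl r) * Q r = (∑ r, f' r * Q r) - ∑ r, fl r * Q r := by
      rw [← Finset.sum_sub_distrib]
      exact Finset.sum_congr rfl fun r _ => by ring
    rw [e] at this
    simp only [hdual]
    linarith
  -- the sSup equals V
  have hmem : V ∈ ((fun f : Fin R → ℝ => ∑ r, f r * Q r) ''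
      {f | (∀ r, fl r ≤ f r ∧ f r ≤ fu r) ∧ ∑ r, f r = 1}) := ⟨f, hfD, hfval⟩
  have hub : ∀ x ∈ ((fun f : Fin R → ℝ => ∑ r, f r * Q r) ''
      {f | (∀ r, fl r ≤ f r ∧ f r ≤ fu r) ∧ ∑ r, f r = 1}), x ≤ V := by
    rintro x ⟨f', ⟨h1, h2⟩, rfl⟩
    exact hweak f' h1 h2 t
  have hsup : sSup ((fun f : Fin R → ℝ => ∑ r, f r * Q r) ''
      {f | (∀ r, fl r ≤ f r ∧ f r ≤ fu r) ∧ ∑ r, f r = 1}) = V :=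
    le_antisymm (csSup_le ⟨V, hmem⟩ hub) (le_csSup ⟨V, hub⟩ hmem)
  -- dual optimality: dual t ≤ dual u for all u, hence D' t ≤ D' u
  have hdopt : ∀ u, dual t ≤ dual u := by
    intro u
    have h1 := hweak f hfD.1 hfD.2 u
    rw [hfval] at h1
    simp only [hV] at h1
    linarith
  have hD'opt : ∀ u, D' t ≤ D' u := by
    intro u
    have h1 := hDrel t
    have h2 := hDrel u
    have := hdopt u
    nlinarith [hs0]
  have hinf : (⨅ u : ℝ, D' u) = D' t := by
    refine le_antisymm (ciInf_le ⟨D' t, ?_⟩ t) (le_ciInf hD'opt)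
    rintro x ⟨u, rfl⟩
    exact hD'opt u
  -- expectation identity
  have hE : (∑ r, fl r) * (∑ r, (fl r / ∑ r', fl r') * Q r) = ∑ r, fl r * Q r := by
    rw [Finset.mul_sum]
    apply Finset.sum_congr rfl
    intro r _
    field_simp
  calc sSup ((fun f : Fin R → ℝ => ∑ r, f r * Q r) ''
      {f | (∀ r, fl r ≤ f r ∧ f r ≤ fu r) ∧ ∑ r, f r = 1}) = V := hsup
    _ = (∑ r, fl r) * (∑ r, (fl r / ∑ r', fl r') * Q r) + (1 - ∑ r, fl r) * ⨅ u : ℝ, D' u := by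
        rw [hinf, hDrel t, hE, hV]
    _ = _ := by rw [hD']
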